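/- Let (X, g) be a Hermitian complex manifold, Z ⊆ X a properly embedded complex submanifold, and α a real-valued C^∞ function on X whose restriction to Z is strongly q-convex with respect to g|_Z (i.e. for every g-orthonormal q-frame e_1,…,e_q of T^{1,0}Z at a point of Z, Σⱼ L(α)(eⱼ,eⱼ) > 0). Suppose ρ is a C^∞ function on X with ρ(p) = 0, (dρ)_p = 0 for each p ∈ Z, and L(ρ)(v,v) > 0 for each v ∈ T^{1,0}_pX \ T^{1,0}Z with p ∈ Z. Then there exists a positive continuous function λ₀ on Z such that for every λ ∈ C^∞(X) with λ > λ₀ on Z, the function β = α + λ·ρ is strongly q-convex with respect to g on some neighborhood of Z in X. -/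

import Mathlib

open MeasureTheory

/-- The Levi form of a (C²) function `φ` on an open subset of `ℂⁿ`, evaluated at the point
`z` in the complex tangent direction `v`:
`L(φ)_z(v, v̄) = (D²φ(v,v) + D²φ(iv,iv))/4`, where `D²φ` is the real Hessian. -/
noncomputable def leviForm {n : ℕ} (φ : (Fin n → ℂ) → ℝ) (z v : Fin n → ℂ) : ℝ :=
  (iteratedFDeriv ℝ 2 φ z ![v, v] +
      iteratedFDeriv ℝ 2 φ z ![Complex.I • v, Complex.I • v]) / 4

/-- A `q`-tuple of tangent vectors `e` at `z` is orthonormal with respect to the Hermitian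
metric `g`. -/
def OrthFrame {n q : ℕ} (g : (Fin n → ℂ) → (Fin n → ℂ) → (Fin n → ℂ) → ℂ)
    (z : Fin n → ℂ) (e : Fin q → (Fin n → ℂ)) : Prop :=
  ∀ i j, g z (e i) (e j) = if i = j then 1 else 0

/-- `φ` is C^∞ strongly `q`-convex with respect to the Hermitian metric `g` on `Ω`
(class `SP^∞(g,q)`): the trace of the Levi form on every `g`-orthonormal `q`-frame
is positive. -/
def StronglyQConvexOn {n : ℕ} (g : (Fin n → ℂ) → (Fin n → ℂ) → (Fin n → ℂ) → ℂ)
    (q : ℕ) (φ : (Fin n → ℂ) → ℝ) (Ω : Set (Fin n → ℂ)) : Prop :=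
  ∀ z ∈ Ω, ∀ e : Fin q → (Fin n → ℂ), OrthFrame g z e →
    0 < ∑ j, leviForm φ z (e j)

/-- `φ` is weakly `q`-convex with respect to `g` on `Ω` (class `W^∞(g,q)`): the trace of
the Levi form on every `g`-orthonormal `q`-frame is nonnegative. -/
def WeaklyQConvexOn {n : ℕ} (g : (Fin n → ℂ) → (Fin n → ℂ) → (Fin n → ℂ) → ℂ)
    (q : ℕ) (φ : (Fin n → ℂ) → ℝ) (Ω : Set (Fin n → ℂ)) : Prop :=
  ∀ z ∈ Ω, ∀ e : Fin q → (Fin n → ℂ), OrthFrame g z e →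
    0 ≤ ∑ j, leviForm φ z (e j)

/-- The Hermitian-metric hypotheses on `g` over `Ω`: continuity, linearity in the first
slot, conjugate symmetry, and positive definiteness. -/
def IsHermitianMetricOn {n : ℕ} (g : (Fin n → ℂ) → (Fin n → ℂ) → (Fin n → ℂ) → ℂ)
    (Ω : Set (Fin n → ℂ)) : Prop :=
  ContinuousOn (fun p : (Fin n → ℂ) × (Fin n → ℂ) × (Fin n → ℂ) => g p.1 p.2.1 p.2.2)
      (Ω ×ˢ Set.univ) ∧
    (∀ z ∈ Ω, ∀ w, IsLinearMap ℂ fun v => g z v w) ∧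
    (∀ z ∈ Ω, ∀ v w, g z w v = starRingEnd ℂ (g z v w)) ∧
    ∀ z ∈ Ω, ∀ v, v ≠ 0 → 0 < (g z v v).re

/-- `Z` is a properly embedded complex submanifold of the open set `Ω ⊆ ℂⁿ`:
`Z` is relatively closed in `Ω` and near every point of `Z` it admits an injective
holomorphic immersive parametrization from an open subset of some `ℂᵏ`. -/
def IsClosedSubmanifoldOf {n : ℕ} (k : ℕ) (Ω Z : Set (Fin n → ℂ)) : Prop :=
  Z ⊆ Ω ∧ closure Z ∩ Ω = Z ∧
    ∀ x ∈ Z, ∃ U : Set (Fin n → ℂ), IsOpen U ∧ x ∈ U ∧ U ⊆ Ω ∧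
      ∃ (V : Set (Fin k → ℂ)) (f : (Fin k → ℂ) → (Fin n → ℂ)),
        IsOpen V ∧ AnalyticOn ℂ f V ∧ Set.InjOn f V ∧
        (∀ v ∈ V, Function.Injective (fderiv ℂ f v)) ∧ f '' V = Z ∩ U

/-- `v` is a holomorphic tangent vector to the set `Z` at the point `p`. -/
def HolTangentAt {n : ℕ} (Z : Set (Fin n → ℂ)) (p v : Fin n → ℂ) : Prop :=
  ∃ γ : ℂ → (Fin n → ℂ), γ 0 = p ∧ (∀ᶠ w in nhds (0 : ℂ), γ w ∈ Z) ∧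
    AnalyticAt ℂ γ 0 ∧ deriv γ 0 = v

section Stmt18Aux

open Complex Set Topology Filter Metric

variable {n : ℕ}

lemma stmt18_vec_pair (v : Fin n → ℂ) : (![v, v] : Fin 2 → (Fin n → ℂ)) = fun _ => v := by
  funext i; fin_cases i <;> rfl

lemma stmt18_leviForm_eq_d2 (φ : (Fin n → ℂ) → ℝ) (z v : Fin n → ℂ) :
    leviForm φ z v = (fderiv ℝ (fderiv ℝ φ) z v v
      + fderiv ℝ (fderiv ℝ φ) z (Complex.I • v) (Complex.I • v)) / 4 := by
  rw [leviForm, iteratedFDeriv_two_apply, iteratedFDeriv_two_apply]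
  simp

lemma stmt18_d2_add {φ ψ : (Fin n → ℂ) → ℝ} {z : Fin n → ℂ}
    (hφ : ∀ᶠ y in 𝓝 z, DifferentiableAt ℝ φ y)
    (hψ : ∀ᶠ y in 𝓝 z, DifferentiableAt ℝ ψ y)
    (hφ2 : DifferentiableAt ℝ (fderiv ℝ φ) z)
    (hψ2 : DifferentiableAt ℝ (fderiv ℝ ψ) z) :
    fderiv ℝ (fderiv ℝ (fun x => φ x + ψ x)) z
      = fderiv ℝ (fderiv ℝ φ) z + fderiv ℝ (fderiv ℝ ψ) z := by
  have h : fderiv ℝ (fun x => φ x + ψ x) =ᶠ[𝓝 z] fun y => fderiv ℝ φ y + fderiv ℝ ψ y := by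
    filter_upwards [hφ, hψ] with y h1 h2
    exact fderiv_add h1 h2
  rw [h.fderiv_eq, fderiv_fun_add hφ2 hψ2]

lemma stmt18_leviForm_add {φ ψ : (Fin n → ℂ) → ℝ} {z : Fin n → ℂ}
    (hφ : ∀ᶠ y in 𝓝 z, DifferentiableAt ℝ φ y)
    (hψ : ∀ᶠ y in 𝓝 z, DifferentiableAt ℝ ψ y)
    (hφ2 : DifferentiableAt ℝ (fderiv ℝ φ) z)
    (hψ2 : DifferentiableAt ℝ (fderiv ℝ ψ) z) (v : Fin n → ℂ) :
    leviForm (fun x => φ x + ψ x) z v = leviForm φ z v + leviForm ψ z v := by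
  rw [stmt18_leviForm_eq_d2, stmt18_leviForm_eq_d2, stmt18_leviForm_eq_d2,
    stmt18_d2_add hφ hψ hφ2 hψ2]
  simp only [ContinuousLinearMap.add_apply]
  ring

lemma stmt18_d2_mul_at {lam ρ : (Fin n → ℂ) → ℝ} {p : Fin n → ℂ}
    (hlam : ∀ᶠ y in 𝓝 p, DifferentiableAt ℝ lam y)
    (hρd : ∀ᶠ y in 𝓝 p, DifferentiableAt ℝ ρ y)
    (hlam2 : DifferentiableAt ℝ (fderiv ℝ lam) p)
    (hρ2 : DifferentiableAt ℝ (fderiv ℝ ρ) p)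
    (h0 : ρ p = 0) (hd0 : fderiv ℝ ρ p = 0) :
    fderiv ℝ (fderiv ℝ (fun x => lam x * ρ x)) p = lam p • fderiv ℝ (fderiv ℝ ρ) p := by
  have h : fderiv ℝ (fun x => lam x * ρ x) =ᶠ[𝓝 p]
      fun y => lam y • fderiv ℝ ρ y + ρ y • fderiv ℝ lam y := by
    filter_upwards [hlam, hρd] with y h1 h2
    exact fderiv_mul h1 h2
  have hl : DifferentiableAt ℝ lam p := hlam.self_of_nhds
  have hr : DifferentiableAt ℝ ρ p := hρd.self_of_nhds
  rw [h.fderiv_eq, fderiv_fun_add (f := fun y => lam y • fderiv ℝ ρ y) (g := fun y => ρ y • fderiv ℝ lam y)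
    (hl.smul hρ2) (hr.smul hlam2), fderiv_fun_smul hl hρ2,
    fderiv_fun_smul hr hlam2, h0, hd0]
  ext w u
  simp

lemma stmt18_leviForm_mul_at {lam ρ : (Fin n → ℂ) → ℝ} {p : Fin n → ℂ}
    (hlam : ∀ᶠ y in 𝓝 p, DifferentiableAt ℝ lam y)
    (hρd : ∀ᶠ y in 𝓝 p, DifferentiableAt ℝ ρ y)
    (hlam2 : DifferentiableAt ℝ (fderiv ℝ lam) p)
    (hρ2 : DifferentiableAt ℝ (fderiv ℝ ρ) p)
    (h0 : ρ p = 0) (hd0 : fderiv ℝ ρ p = 0) (v : Fin n → ℂ) :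
    leviForm (fun x => lam x * ρ x) p v = lam p * leviForm ρ p v := by
  rw [stmt18_leviForm_eq_d2, stmt18_leviForm_eq_d2,
    stmt18_d2_mul_at hlam hρd hlam2 hρ2 h0 hd0]
  simp only [ContinuousLinearMap.smul_apply, smul_eq_mul]
  ring

lemma stmt18_ev_diff {Ω : Set (Fin n → ℂ)} (hΩ : IsOpen Ω) {φ : (Fin n → ℂ) → ℝ}
    (hφ : ContDiffOn ℝ (⊤ : ℕ∞) φ Ω) {p : Fin n → ℂ} (hp : p ∈ Ω) :
    ∀ᶠ y in 𝓝 p, DifferentiableAt ℝ φ y :=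
  (hΩ.eventually_mem hp).mono fun y hy =>
    (hφ.differentiableOn (by simp)).differentiableAt (hΩ.mem_nhds hy)

lemma stmt18_d2_diff {Ω : Set (Fin n → ℂ)} (hΩ : IsOpen Ω) {φ : (Fin n → ℂ) → ℝ}
    (hφ : ContDiffOn ℝ (⊤ : ℕ∞) φ Ω) {p : Fin n → ℂ} (hp : p ∈ Ω) :
    DifferentiableAt ℝ (fderiv ℝ φ) p :=
  ((hφ.contDiffAt (hΩ.mem_nhds hp)).fderiv_right (m := 1)
    (by exact_mod_cast ENat.natCast_le_of_coe_top_le_withTop le_rfl 2)).differentiableAt one_ne_zero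

lemma stmt18_levi_tangent_zero {Ω Z : Set (Fin n → ℂ)} (hΩ : IsOpen Ω) (hZΩ : Z ⊆ Ω)
    {ρ : (Fin n → ℂ) → ℝ} (hρ : ContDiffOn ℝ (⊤ : ℕ∞) ρ Ω)
    (hρ0 : ∀ p ∈ Z, ρ p = 0) (hdρ0 : ∀ p ∈ Z, fderiv ℝ ρ p = 0)
    {p v : Fin n → ℂ} (hp : p ∈ Z) (hv : HolTangentAt Z p v) : leviForm ρ p v = 0 := by
  obtain ⟨γ, hγ0, hγZ, hγa, hγd⟩ := hv
  have hpΩ : p ∈ Ω := hZΩ hp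
  have hργ : (fun w => ρ (γ w)) =ᶠ[𝓝 (0:ℂ)] fun _ => (0:ℝ) :=
    hγZ.mono fun w hw => hρ0 _ hw
  have hz2 : fderiv ℝ (fderiv ℝ (fun w => ρ (γ w))) 0 = 0 := by
    have h1 : fderiv ℝ (fun w => ρ (γ w)) =ᶠ[𝓝 (0:ℂ)] fun _ => (0 : ℂ →L[ℝ] ℝ) := by
      have h2 := hργ.fderiv (𝕜 := ℝ)
      refine h2.mono fun w hw => ?_
      rw [hw, fderiv_fun_const]
      rfl
    rw [h1.fderiv_eq, fderiv_fun_const]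
    rfl
  have hγev : ∀ᶠ w in 𝓝 (0:ℂ), DifferentiableAt ℝ γ w :=
    hγa.eventually_analyticAt.mono fun w hw => hw.differentiableAt.restrictScalars ℝ
  have hγΩ : ∀ᶠ w in 𝓝 (0:ℂ), γ w ∈ Ω := by
    have h : ContinuousAt γ 0 := hγa.continuousAt
    exact h.preimage_mem_nhds (hΩ.mem_nhds (hγ0 ▸ hpΩ))
  have hρdiff : ∀ y ∈ Ω, DifferentiableAt ℝ ρ y := fun y hy =>
    (hρ.differentiableOn (by simp)).differentiableAt (hΩ.mem_nhds hy)
  have hcomp : fderiv ℝ (fun w => ρ (γ w)) =ᶠ[𝓝 (0:ℂ)]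
      fun w => (fderiv ℝ ρ (γ w)).comp (fderiv ℝ γ w) := by
    filter_upwards [hγev, hγΩ] with w h1 h2
    exact fderiv_comp w (hρdiff _ h2) h1
  have hγd0 : DifferentiableAt ℝ γ 0 := hγev.self_of_nhds
  have hρ2 : DifferentiableAt ℝ (fderiv ℝ ρ) p :=
    ((hρ.contDiffAt (hΩ.mem_nhds hpΩ)).fderiv_right (m := 1)
      (by exact_mod_cast ENat.natCast_le_of_coe_top_le_withTop le_rfl 2)).differentiableAt one_ne_zero
  have hcd : DifferentiableAt ℝ (fun w => fderiv ℝ ρ (γ w)) 0 := by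
    have hρ2' : DifferentiableAt ℝ (fderiv ℝ ρ) (γ 0) := by rwa [hγ0]
    exact hρ2'.comp 0 hγd0
  have hdd : DifferentiableAt ℝ (fderiv ℝ γ) 0 := by
    have h : ContDiffAt ℝ (⊤ : ℕ∞) γ 0 := (hγa.restrictScalars (𝕜' := ℂ)).contDiffAt.of_le le_top
    exact (h.fderiv_right (m := 1)
      (by exact_mod_cast ENat.natCast_le_of_coe_top_le_withTop le_rfl 2)).differentiableAt one_ne_zero
  have hkey : fderiv ℝ (fderiv ℝ (fun w => ρ (γ w))) 0 =
      fderiv ℝ (fun w => (fderiv ℝ ρ (γ w)).comp (fderiv ℝ γ w)) 0 := hcomp.fderiv_eq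
  have hclm := fderiv_clm_comp hcd hdd
  have hc0 : fderiv ℝ ρ (γ 0) = 0 := by rw [hγ0]; exact hdρ0 p hp
  have hchain2 : fderiv ℝ (fun w => fderiv ℝ ρ (γ w)) 0 =
      (fderiv ℝ (fderiv ℝ ρ) p).comp (fderiv ℝ γ 0) := by
    have h := fderiv_comp (𝕜 := ℝ) (g := fderiv ℝ ρ) (f := γ) 0 (by rwa [hγ0]) hγd0
    simpa [hγ0, Function.comp_def] using h
  have hγlin : ∀ u : ℂ, fderiv ℝ γ 0 u = u • v := by
    intro u
    have h1 : fderiv ℝ γ 0 = (fderiv ℂ γ 0).restrictScalars ℝ :=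
      (hγa.differentiableAt.fderiv_restrictScalars ℝ)
    have h2 : fderiv ℂ γ 0 u = u • fderiv ℂ γ 0 1 := by
      have h := (fderiv ℂ γ 0).map_smul u (1:ℂ)
      simpa using h.symm
    rw [h1]
    show fderiv ℂ γ 0 u = u • v
    rw [h2, ← hγd]
    rfl
  have hfin : ∀ u : ℂ, fderiv ℝ (fderiv ℝ ρ) p (u • v) (u • v) = 0 := by
    intro u
    have h := hz2
    rw [hkey, hclm] at h
    have h2 := congrArg (fun (L : ℂ →L[ℝ] (ℂ →L[ℝ] ℝ)) => L u u) h
    simp only [ContinuousLinearMap.add_apply, ContinuousLinearMap.coe_comp', Function.comp_apply,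
      ContinuousLinearMap.flip_apply, ContinuousLinearMap.zero_apply, hc0, hchain2,
      ContinuousLinearMap.compL_apply] at h2
    simpa [hγlin u, hc0] using h2
  have h1 := hfin 1
  have hI := hfin Complex.I
  rw [one_smul] at h1
  rw [stmt18_leviForm_eq_d2, h1, hI]
  norm_num

lemma stmt18_levi_continuousOn {Ω : Set (Fin n → ℂ)} (hΩ : IsOpen Ω) {φ : (Fin n → ℂ) → ℝ}
    (hφ : ContDiffOn ℝ (⊤ : ℕ∞) φ Ω) :
    ContinuousOn (fun x : (Fin n → ℂ) × (Fin n → ℂ) => leviForm φ x.1 x.2) (Ω ×ˢ univ) := by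
  have h2 : ContinuousOn (iteratedFDeriv ℝ 2 φ) Ω := by
    have h := hφ.continuousOn_iteratedFDerivWithin (m := 2)
      (by exact_mod_cast ENat.natCast_le_of_coe_top_le_withTop le_rfl 2) hΩ.uniqueDiffOn
    exact h.congr fun x hx => ((iteratedFDerivWithin_of_isOpen 2 hΩ) hx).symm
  have key : ∀ c : ℂ, ContinuousOn
      (fun x : (Fin n → ℂ) × (Fin n → ℂ) => iteratedFDeriv ℝ 2 φ x.1 ![c • x.2, c • x.2])
      (Ω ×ˢ univ) := by
    intro c
    have h1 : ContinuousOn (fun x : (Fin n → ℂ) × (Fin n → ℂ) =>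
        ((iteratedFDeriv ℝ 2 φ x.1 : ContinuousMultilinearMap ℝ (fun _ : Fin 2 => (Fin n → ℂ)) ℝ),
          (fun _ : Fin 2 => c • x.2))) (Ω ×ˢ univ) := by
      refine ContinuousOn.prodMk ?_ ?_
      · exact h2.comp continuous_fst.continuousOn (fun x hx => hx.1)
      · exact (by fun_prop : Continuous fun x : (Fin n → ℂ) × (Fin n → ℂ) =>
          fun _ : Fin 2 => c • x.2).continuousOn
    have h3 := ContinuousEval.continuous_eval
      (F := ContinuousMultilinearMap ℝ (fun _ : Fin 2 => (Fin n → ℂ)) ℝ)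
    have h4 := h3.comp_continuousOn h1
    refine h4.congr fun x _ => ?_
    simp only [Function.comp_apply, stmt18_vec_pair]
  have hc := ((key 1).add (key Complex.I)).div_const 4
  refine hc.congr fun x _ => ?_
  simp [leviForm]

lemma stmt18_trace_continuousAt {q : ℕ} {Ω : Set (Fin n → ℂ)} (hΩ : IsOpen Ω)
    {φ : (Fin n → ℂ) → ℝ} (hφ : ContDiffOn ℝ (⊤ : ℕ∞) φ Ω)
    {x : (Fin n → ℂ) × (Fin q → Fin n → ℂ)} (hx : x.1 ∈ Ω) :
    ContinuousAt (fun y : (Fin n → ℂ) × (Fin q → Fin n → ℂ) =>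
      ∑ j, leviForm φ y.1 (y.2 j)) x := by
  have h := stmt18_levi_continuousOn hΩ hφ
  refine tendsto_finset_sum _ fun j _ => ?_
  have hmap : ContinuousAt (fun y : (Fin n → ℂ) × (Fin q → Fin n → ℂ) => (y.1, y.2 j)) x :=
    (continuous_fst.prodMk ((continuous_apply j).comp continuous_snd)).continuousAt
  have h2 : ContinuousAt (fun z : (Fin n → ℂ) × (Fin n → ℂ) => leviForm φ z.1 z.2) (x.1, x.2 j) :=
    h.continuousAt ((hΩ.prod isOpen_univ).mem_nhds ⟨hx, trivial⟩)
  have h3 := h2.tendsto.comp hmap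
  exact h3

lemma stmt18_g_smul_re {g : (Fin n → ℂ) → (Fin n → ℂ) → (Fin n → ℂ) → ℂ} {Ω : Set (Fin n → ℂ)}
    (hg : IsHermitianMetricOn g Ω) {z : Fin n → ℂ} (hz : z ∈ Ω) (r : ℝ) (v : Fin n → ℂ) :
    (g z (r • v) (r • v)).re = r ^ 2 * (g z v v).re := by
  have hsm : r • v = (r : ℂ) • v := by
    funext i; simp [Pi.smul_apply, Complex.real_smul]
  have h1 : g z ((r:ℂ) • v) ((r:ℂ) • v) = (r:ℂ) * g z v ((r:ℂ) • v) := by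
    have h := (hg.2.1 z hz ((r:ℂ) • v)).map_smul (r:ℂ) v
    simpa [smul_eq_mul] using h
  have h2 : g z v ((r:ℂ) • v) = (r:ℂ) * (starRingEnd ℂ) (g z v v) := by
    rw [hg.2.2.1 z hz ((r:ℂ) • v) v]
    have h := (hg.2.1 z hz v).map_smul (r:ℂ) v
    rw [h]
    simp [map_mul, Complex.conj_ofReal]
  rw [hsm, h1, h2]
  have h3 : ((r:ℂ) * ((r:ℂ) * (starRingEnd ℂ) (g z v v))).re
      = r^2 * ((starRingEnd ℂ) (g z v v)).re := by
    simp [Complex.mul_re, Complex.ofReal_re, Complex.ofReal_im]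
    ring
  rw [h3, Complex.conj_re]

lemma stmt18_g_zero {g : (Fin n → ℂ) → (Fin n → ℂ) → (Fin n → ℂ) → ℂ} {Ω : Set (Fin n → ℂ)}
    (hg : IsHermitianMetricOn g Ω) {z : Fin n → ℂ} (hz : z ∈ Ω) (w : Fin n → ℂ) :
    g z 0 w = 0 := (hg.2.1 z hz w).map_zero

lemma stmt18_coercive {Ω : Set (Fin n → ℂ)} {g : (Fin n → ℂ) → (Fin n → ℂ) → (Fin n → ℂ) → ℂ}
    (hg : IsHermitianMetricOn g Ω)
    {K : Set (Fin n → ℂ)} (hK : IsCompact K) (hKΩ : K ⊆ Ω) :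
    ∃ δ : ℝ, 0 < δ ∧ ∀ z ∈ K, ∀ v : Fin n → ℂ, δ * ‖v‖ ^ 2 ≤ (g z v v).re := by
  have hgc : ContinuousOn (fun x : (Fin n → ℂ) × (Fin n → ℂ) => (g x.1 x.2 x.2).re)
      (Ω ×ˢ (univ : Set (Fin n → ℂ))) := by
    have h1 : ContinuousOn (fun x : (Fin n → ℂ) × (Fin n → ℂ) => g x.1 x.2 x.2)
        (Ω ×ˢ (univ : Set (Fin n → ℂ))) := by
      refine hg.1.comp (continuousOn_fst.prodMk (continuousOn_snd.prodMk continuousOn_snd)) ?_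
      intro x hx
      exact ⟨hx.1, trivial⟩
    exact Complex.continuous_re.comp_continuousOn h1
  have hScomp : IsCompact (K ×ˢ sphere (0 : Fin n → ℂ) 1) := hK.prod (isCompact_sphere _ _)
  rcases (K ×ˢ sphere (0 : Fin n → ℂ) 1).eq_empty_or_nonempty with hS | hS
  · refine ⟨1, one_pos, fun z hz v => ?_⟩
    rcases eq_or_ne v 0 with rfl | hv
    · simp [stmt18_g_zero hg (hKΩ hz)]
    · exfalso
      have hu : (z, ‖v‖⁻¹ • v) ∈ K ×ˢ sphere (0 : Fin n → ℂ) 1 := by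
        refine ⟨hz, ?_⟩
        simp [norm_smul, norm_inv, inv_mul_cancel₀ (norm_ne_zero_iff.mpr hv)]
      rw [hS] at hu
      exact hu
  · obtain ⟨x₀, hx₀, hmin'⟩ := hScomp.exists_isMinOn hS
      (hgc.mono (fun x hx => ⟨hKΩ hx.1, trivial⟩))
    have hmin : ∀ y ∈ K ×ˢ sphere (0 : Fin n → ℂ) 1,
        (g x₀.1 x₀.2 x₀.2).re ≤ (g y.1 y.2 y.2).re := fun y hy => hmin' hy
    have hx₀ne : x₀.2 ≠ 0 := by
      have h : ‖x₀.2‖ = 1 := by simpa using hx₀.2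
      intro hh; rw [hh] at h; simp at h
    have hδ : 0 < (g x₀.1 x₀.2 x₀.2).re := hg.2.2.2 x₀.1 (hKΩ hx₀.1) x₀.2 hx₀ne
    refine ⟨(g x₀.1 x₀.2 x₀.2).re, hδ, fun z hz v => ?_⟩
    rcases eq_or_ne v 0 with rfl | hv
    · simp [stmt18_g_zero hg (hKΩ hz)]
    · set u := ‖v‖⁻¹ • v with hu
      have hus : u ∈ sphere (0 : Fin n → ℂ) 1 := by
        simp [hu, norm_smul, norm_inv, inv_mul_cancel₀ (norm_ne_zero_iff.mpr hv)]
      have h1 : (g x₀.1 x₀.2 x₀.2).re ≤ (g z u u).re := hmin (z, u) ⟨hz, hus⟩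
      have h2 : (g z v v).re = ‖v‖ ^ 2 * (g z u u).re := by
        have hv' : v = ‖v‖ • u := by
          rw [hu, smul_smul, mul_inv_cancel₀ (norm_ne_zero_iff.mpr hv), one_smul]
        conv_lhs => rw [hv']
        exact stmt18_g_smul_re hg (hKΩ hz) ‖v‖ u
      rw [h2]
      have hnn : (0:ℝ) ≤ ‖v‖ ^ 2 := sq_nonneg _
      calc (g x₀.1 x₀.2 x₀.2).re * ‖v‖ ^ 2 ≤ (g z u u).re * ‖v‖ ^ 2 :=
            mul_le_mul_of_nonneg_right h1 hnn
        _ = ‖v‖ ^ 2 * (g z u u).re := by ring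

lemma stmt18_tendsto_const_of_closure {P M : Type*} [TopologicalSpace P] [TopologicalSpace M]
    [T2Space M] {f : P → M} {s : Set P} {x : P} (hx : x ∈ closure s) (hf : ContinuousAt f x)
    {c : M} (h : ∀ y ∈ s, f y = c) : f x = c := by
  haveI := mem_closure_iff_nhdsWithin_neBot.mp hx
  refine tendsto_nhds_unique ((hf.continuousWithinAt (s := s)).tendsto) ?_
  exact tendsto_const_nhds.congr'
    (eventually_nhdsWithin_of_forall fun y hy => (h y hy).symm)

lemma stmt18_le_zero_of_closure {P : Type*} [TopologicalSpace P]
    {f : P → ℝ} {s : Set P} {x : P} (hx : x ∈ closure s) (hf : ContinuousAt f x)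
    (h : ∀ y ∈ s, f y ≤ 0) : f x ≤ 0 := by
  haveI := mem_closure_iff_nhdsWithin_neBot.mp hx
  exact le_of_tendsto ((hf.continuousWithinAt (s := s)).tendsto)
    (eventually_nhdsWithin_of_forall h)

lemma stmt18_exists_c {P : Type*} [TopologicalSpace P] [T2Space P] {C : Set P} (hC : IsCompact C)
    {A R : P → ℝ} (hA : ∀ x ∈ C, ContinuousAt A x) (hR : ∀ x ∈ C, ContinuousAt R x)
    (hR0 : ∀ x ∈ C, 0 ≤ R x) (hpos : ∀ x ∈ C, R x = 0 → 0 < A x) :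
    ∃ c : ℝ, ∀ x ∈ C, 0 < A x + c * R x := by
  by_contra hcon
  push_neg at hcon
  set S : ℕ → Set P := fun m => C ∩ closure {x | x ∈ C ∧ A x + m * R x ≤ 0} with hSdef
  have hSne : ∀ m, (S m).Nonempty := by
    intro m
    obtain ⟨x, hxC, hx⟩ := hcon m
    exact ⟨x, hxC, subset_closure ⟨hxC, hx⟩⟩
  have hScomp : ∀ m, IsCompact (S m) := fun m => hC.inter_right isClosed_closure
  have hSanti : ∀ m, S (m+1) ⊆ S m := by
    intro m
    refine Set.inter_subset_inter_right _ (closure_mono ?_)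
    rintro x ⟨hxC, hx⟩
    refine ⟨hxC, le_trans (by
      have := hR0 x hxC
      push_cast
      nlinarith) hx⟩
  have hint : (⋂ m, S m).Nonempty := by
    apply IsCompact.nonempty_iInter_of_sequence_nonempty_isCompact_isClosed S hSanti hSne
      (hScomp 0) (fun m => (hC.isClosed.inter isClosed_closure))
  obtain ⟨x, hx⟩ := hint
  have hxC : x ∈ C := (Set.mem_iInter.mp hx 0).1
  have hxle : ∀ m : ℕ, A x + m * R x ≤ 0 := by
    intro m
    have hcl : x ∈ closure {y | y ∈ C ∧ A y + m * R y ≤ 0} := (Set.mem_iInter.mp hx m).2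
    exact stmt18_le_zero_of_closure (f := fun y => A y + (m:ℝ) * R y)
      (s := {y | y ∈ C ∧ A y + (m:ℝ) * R y ≤ 0}) hcl
      ((hA x hxC).add (continuousAt_const.mul (hR x hxC))) (fun y hy => hy.2)
  rcases (hR0 x hxC).lt_or_eq with hRpos | hReq
  · obtain ⟨m, hm⟩ := exists_nat_gt ((-A x) / R x)
    have h1 := hxle m
    have h2 : (m:ℝ) * R x ≤ -A x := by linarith
    have h3 : (m:ℝ) ≤ -A x / R x := (le_div_iff₀ hRpos).mpr h2
    linarith
  · have hA0 := hpos x hxC hReq.symm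
    have h1 := hxle 0
    push_cast at h1
    linarith

end Stmt18Aux

section Main

open Complex Set Topology Filter Metric

set_option maxHeartbeats 2000000 in
/-- **Lemma (extension of strong `q`-convexity across a submanifold).** -/
theorem stmt18 {n : ℕ} (q k : ℕ) (hq : 0 < q)
    (Ω : Set (Fin n → ℂ)) (hΩ : IsOpen Ω)
    (g : (Fin n → ℂ) → (Fin n → ℂ) → (Fin n → ℂ) → ℂ) (hg : IsHermitianMetricOn g Ω)
    (Z : Set (Fin n → ℂ)) (hZ : IsClosedSubmanifoldOf k Ω Z)
    (α : (Fin n → ℂ) → ℝ) (hα : ContDiffOn ℝ (⊤ : ℕ∞) α Ω)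
    (hαZ : ∀ p ∈ Z, ∀ e : Fin q → (Fin n → ℂ), (∀ j, HolTangentAt Z p (e j)) →
      OrthFrame g p e → 0 < ∑ j, leviForm α p (e j))
    (ρ : (Fin n → ℂ) → ℝ) (hρ : ContDiffOn ℝ (⊤ : ℕ∞) ρ Ω)
    (hρ0 : ∀ p ∈ Z, ρ p = 0) (hdρ0 : ∀ p ∈ Z, fderiv ℝ ρ p = 0)
    (hρpos : ∀ p ∈ Z, ∀ v : Fin n → ℂ, ¬ HolTangentAt Z p v → 0 < leviForm ρ p v) :
    ∃ lam₀ : (Fin n → ℂ) → ℝ, ContinuousOn lam₀ Z ∧ (∀ p ∈ Z, 0 < lam₀ p) ∧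
      ∀ lam : (Fin n → ℂ) → ℝ, ContDiffOn ℝ (⊤ : ℕ∞) lam Ω →
        (∀ p ∈ Z, lam₀ p < lam p) →
        ∃ W : Set (Fin n → ℂ), IsOpen W ∧ Z ⊆ W ∧ W ⊆ Ω ∧
          StronglyQConvexOn g q (fun x => α x + lam x * ρ x) W := by
  classical
  obtain ⟨hZΩ, hZcl, -⟩ := hZ
  -- nonnegativity of the Levi form of ρ along Z
  have hRnonneg : ∀ z ∈ Z, ∀ w : Fin n → ℂ, 0 ≤ leviForm ρ z w := by
    intro z hz w
    by_cases ht : HolTangentAt Z z w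
    · rw [stmt18_levi_tangent_zero hΩ hZΩ hρ hρ0 hdρ0 hz ht]
    · exact le_of_lt (hρpos z hz w ht)
  -- continuity of the metric entries
  have hGc : ∀ (i j : Fin q), ∀ x : (Fin n → ℂ) × (Fin q → Fin n → ℂ), x.1 ∈ Ω →
      ContinuousAt (fun y : (Fin n → ℂ) × (Fin q → Fin n → ℂ) => g y.1 (y.2 i) (y.2 j)) x := by
    intro i j x hx
    have h1 : ContinuousOn (fun y : (Fin n → ℂ) × (Fin q → Fin n → ℂ) => g y.1 (y.2 i) (y.2 j))
        {y : (Fin n → ℂ) × (Fin q → Fin n → ℂ) | y.1 ∈ Ω} := by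
      have hmap : Continuous (fun y : (Fin n → ℂ) × (Fin q → Fin n → ℂ) =>
          (y.1, (y.2 i, y.2 j))) := by fun_prop
      refine hg.1.comp hmap.continuousOn ?_
      intro y hy; exact ⟨hy, trivial⟩
    exact h1.continuousAt ((hΩ.preimage continuous_fst).mem_nhds hx)
  -- local uniform constants
  have key : ∀ p : Fin n → ℂ, p ∈ Z → ∃ r : ℝ, 0 < r ∧ closedBall p r ⊆ Ω ∧ ∃ c : ℝ, 1 ≤ c ∧
      ∀ z ∈ Z ∩ closedBall p r, ∀ e : Fin q → (Fin n → ℂ), OrthFrame g z e →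
        0 < (∑ j, leviForm α z (e j)) + c * ∑ j, leviForm ρ z (e j) := by
    intro p hp
    have hpΩ : p ∈ Ω := hZΩ hp
    obtain ⟨ε, hε, hball⟩ := Metric.isOpen_iff.mp hΩ p hpΩ
    have hcbΩ : closedBall p (ε/2) ⊆ Ω := (closedBall_subset_ball (by linarith)).trans hball
    refine ⟨ε/2, by positivity, hcbΩ, ?_⟩
    set K := Z ∩ closedBall p (ε/2) with hKdef
    have hKeq : K = closure Z ∩ closedBall p (ε/2) := by
      ext x
      constructor
      · rintro ⟨h1, h2⟩; exact ⟨subset_closure h1, h2⟩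
      · rintro ⟨h1, h2⟩
        have h3 : x ∈ closure Z ∩ Ω := ⟨h1, hcbΩ h2⟩
        rw [hZcl] at h3
        exact ⟨h3, h2⟩
    have hKcl : IsClosed K := by
      rw [hKeq]; exact isClosed_closure.inter isClosed_closedBall
    have hKcomp : IsCompact K :=
      (isCompact_closedBall p (ε/2)).of_isClosed_subset hKcl inter_subset_right
    have hKΩ : K ⊆ Ω := fun x hx => hcbΩ hx.2
    obtain ⟨δ, hδ, hco⟩ := stmt18_coercive hg hKcomp hKΩ
    set M := Real.sqrt δ⁻¹ with hMdef
    set C : Set ((Fin n → ℂ) × (Fin q → Fin n → ℂ)) :=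
      {x | x.1 ∈ K ∧ OrthFrame g x.1 x.2} with hCdef
    have hbound : ∀ x ∈ C, ∀ i, ‖x.2 i‖ ≤ M := by
      intro x hx i
      have h1 := hco x.1 hx.1 (x.2 i)
      have h2 : g x.1 (x.2 i) (x.2 i) = 1 := by simpa using hx.2 i i
      rw [h2] at h1
      have h3 : δ * ‖x.2 i‖^2 ≤ 1 := by simpa using h1
      have h4 : ‖x.2 i‖^2 ≤ δ⁻¹ := by
        rw [← one_div, le_div_iff₀ hδ]
        nlinarith
      rw [hMdef]
      exact Real.le_sqrt_of_sq_le h4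
    set D : Set ((Fin n → ℂ) × (Fin q → Fin n → ℂ)) :=
      K ×ˢ univ.pi (fun _ : Fin q => closedBall (0 : Fin n → ℂ) M) with hDdef
    have hCsub : C ⊆ D := by
      intro x hx
      refine ⟨hx.1, fun i _ => ?_⟩
      simpa [Metric.mem_closedBall, dist_zero_right] using hbound x hx i
    have hDcomp : IsCompact D :=
      hKcomp.prod (isCompact_univ_pi fun _ => isCompact_closedBall _ _)
    have hCclosed : IsClosed C := by
      apply isClosed_of_closure_subset
      intro x hxcl
      have hxD : x ∈ D := hDcomp.isClosed.closure_subset ((closure_mono hCsub) hxcl)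
      refine ⟨hxD.1, ?_⟩
      intro i j
      exact stmt18_tendsto_const_of_closure hxcl (hGc i j x (hKΩ hxD.1)) (fun y hy => hy.2 i j)
    have hCcomp : IsCompact C := hDcomp.of_isClosed_subset hCclosed hCsub
    obtain ⟨c₀, hc₀⟩ := stmt18_exists_c hCcomp
      (A := fun x => ∑ j, leviForm α x.1 (x.2 j))
      (R := fun x => ∑ j, leviForm ρ x.1 (x.2 j))
      (fun x hx => stmt18_trace_continuousAt hΩ hα (hKΩ hx.1))
      (fun x hx => stmt18_trace_continuousAt hΩ hρ (hKΩ hx.1))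
      (fun x hx => Finset.sum_nonneg fun j _ => hRnonneg x.1 hx.1.1 (x.2 j))
      (fun x hx hRx => by
        have hall : ∀ j, leviForm ρ x.1 (x.2 j) = 0 := by
          have h := (Finset.sum_eq_zero_iff_of_nonneg
            (fun j _ => hRnonneg x.1 hx.1.1 (x.2 j))).mp hRx
          exact fun j => h j (Finset.mem_univ j)
        have htan : ∀ j, HolTangentAt Z x.1 (x.2 j) := by
          intro j
          by_contra hnt
          exact (ne_of_gt (hρpos x.1 hx.1.1 (x.2 j) hnt)) (hall j)
        exact hαZ x.1 hx.1.1 x.2 htan hx.2)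
    refine ⟨max c₀ 1, le_max_right _ _, ?_⟩
    intro z hz e he
    have hx : ((z, e) : (Fin n → ℂ) × (Fin q → Fin n → ℂ)) ∈ C := ⟨hz, he⟩
    have h1 := hc₀ (z, e) hx
    have hRz : 0 ≤ ∑ j, leviForm ρ z (e j) :=
      Finset.sum_nonneg fun j _ => hRnonneg z hz.1 (e j)
    have h2 : c₀ * (∑ j, leviForm ρ z (e j)) ≤ max c₀ 1 * ∑ j, leviForm ρ z (e j) :=
      mul_le_mul_of_nonneg_right (le_max_left _ _) hRz
    simp only at h1 ⊢
    linarith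
  choose! r hr hrΩ c hc1 hckey using key
  -- partition of unity on Z
  let U : Z → Set Z := fun i => (Subtype.val : Z → Fin n → ℂ) ⁻¹' (ball (i : Fin n → ℂ) (r i))
  have hUo : ∀ i, IsOpen (U i) := fun i => isOpen_ball.preimage continuous_subtype_val
  have hUcov : (univ : Set Z) ⊆ ⋃ i, U i := by
    intro x _
    exact mem_iUnion.mpr ⟨x, by
      simp only [U, mem_preimage]
      exact mem_ball_self (hr x x.2)⟩
  obtain ⟨f, hfsub⟩ := PartitionOfUnity.exists_isSubordinate (s := (univ : Set Z))
    isClosed_univ U hUo hUcov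
  let lam₀Z : Z → ℝ := fun x => ∑ᶠ i, f i x • c (i : Fin n → ℂ)
  have hlam₀Zc : Continuous lam₀Z :=
    f.continuous_finsum_smul (g := fun i _ => c (i : Fin n → ℂ)) (fun i x _ => continuousAt_const)
  have hmin : ∀ x : Z, ∃ i : Z, f i x ≠ 0 ∧ c (i : Fin n → ℂ) ≤ lam₀Z x ∧ 1 ≤ lam₀Z x := by
    intro x
    have hne : (f.finsupport x).Nonempty := by
      by_contra hemp
      rw [Finset.not_nonempty_iff_eq_empty] at hemp
      have h1 := f.sum_finsupport (x₀ := x) (mem_univ x)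
      rw [hemp] at h1
      simp at h1
    obtain ⟨i₀, hi₀mem, hi₀min⟩ := Finset.exists_min_image (f.finsupport x)
      (fun i => c (i : Fin n → ℂ)) hne
    have hsum : lam₀Z x = ∑ i ∈ f.finsupport x, f i x • c (i : Fin n → ℂ) :=
      (f.sum_finsupport_smul_eq_finsum (x₀ := x) (φ := fun i _ => c (i : Fin n → ℂ))).symm
    have hge : c (i₀ : Fin n → ℂ) ≤ lam₀Z x := by
      rw [hsum]
      calc c (i₀ : Fin n → ℂ) = (∑ i ∈ f.finsupport x, f i x) * c (i₀ : Fin n → ℂ) := by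
            rw [f.sum_finsupport (mem_univ x), one_mul]
        _ = ∑ i ∈ f.finsupport x, f i x * c (i₀ : Fin n → ℂ) := by rw [Finset.sum_mul]
        _ ≤ ∑ i ∈ f.finsupport x, f i x • c (i : Fin n → ℂ) := by
            refine Finset.sum_le_sum fun i hi => ?_
            exact mul_le_mul_of_nonneg_left (hi₀min i hi) (f.nonneg i x)
    have hfi : f i₀ x ≠ 0 := by
      have h := (f.mem_finsupport x).mp hi₀mem
      simpa using h
    exact ⟨i₀, hfi, hge, le_trans (hc1 i₀ i₀.2) hge⟩
  set lam₀amb : (Fin n → ℂ) → ℝ := fun x => if h : x ∈ Z then lam₀Z ⟨x, h⟩ else 1 with hambdef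
  have hamb : ∀ (p : Fin n → ℂ) (hp : p ∈ Z), lam₀amb p = lam₀Z ⟨p, hp⟩ := fun p hp => dif_pos hp
  refine ⟨lam₀amb, ?_, ?_, ?_⟩
  · rw [continuousOn_iff_continuous_restrict]
    have hres : Set.domRestrict Z lam₀amb = lam₀Z := by
      funext x
      rw [Set.domRestrict_apply, hamb ↑x x.2, Subtype.coe_eta]
    rw [hres]
    exact hlam₀Zc
  · intro p hp
    rw [hamb p hp]
    obtain ⟨i, -, -, h1⟩ := hmin ⟨p, hp⟩
    linarith
  · intro lam hlamsm hgt
    set β := fun x => α x + lam x * ρ x with hβdef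
    have hβ : ContDiffOn ℝ (⊤ : ℕ∞) β Ω := hα.add (hlamsm.mul hρ)
    have perpoint : ∀ p ∈ Z, ∃ V : Set (Fin n → ℂ), IsOpen V ∧ p ∈ V ∧ V ⊆ Ω ∧
        ∀ z ∈ V, ∀ e : Fin q → (Fin n → ℂ), OrthFrame g z e →
          0 < ∑ j, leviForm β z (e j) := by
      intro p hp
      by_contra hno
      push_neg at hno
      have hpΩ : p ∈ Ω := hZΩ hp
      obtain ⟨ε, hε, hball⟩ := Metric.isOpen_iff.mp hΩ p hpΩ
      have hcbΩ : closedBall p (ε/2) ⊆ Ω := (closedBall_subset_ball (by linarith)).trans hball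
      obtain ⟨δ, hδ, hco⟩ := stmt18_coercive hg (isCompact_closedBall p (ε/2)) hcbΩ
      set M := Real.sqrt δ⁻¹ with hMdef
      have hseq : ∀ m : ℕ, ∃ z, (z ∈ ball p (min (ε/2) (1/(m+1)))) ∧
          ∃ e : Fin q → (Fin n → ℂ), OrthFrame g z e ∧ (∑ j, leviForm β z (e j)) ≤ 0 := by
        intro m
        have h1 : IsOpen (ball p (min (ε/2) (1/((m:ℝ)+1)))) := isOpen_ball
        have h2 : p ∈ ball p (min (ε/2) (1/((m:ℝ)+1))) :=
          mem_ball_self (lt_min (by linarith) (by positivity))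
        have h3 : ball p (min (ε/2) (1/((m:ℝ)+1))) ⊆ Ω :=
          ((ball_subset_ball (min_le_left _ _)).trans ball_subset_closedBall).trans hcbΩ
        obtain ⟨z, hz, e, he, hT⟩ := hno _ h1 h2 h3
        exact ⟨z, hz, e, he, hT⟩
      choose zs hzs es hes hTs using hseq
      have hzp : Tendsto zs atTop (𝓝 p) := by
        rw [tendsto_iff_dist_tendsto_zero]
        refine squeeze_zero (fun m => dist_nonneg) (fun m => ?_)
          tendsto_one_div_add_atTop_nhds_zero_nat
        exact le_of_lt (lt_of_lt_of_le (hzs m) (min_le_right _ _))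
      have hzcb : ∀ m, zs m ∈ closedBall p (ε/2) := fun m =>
        ball_subset_closedBall ((ball_subset_ball (min_le_left _ _)) (hzs m))
      set D : Set ((Fin n → ℂ) × (Fin q → Fin n → ℂ)) :=
        (closedBall p (ε/2)) ×ˢ univ.pi (fun _ : Fin q => closedBall (0 : Fin n → ℂ) M)
        with hDdef
      have hDcomp : IsCompact D :=
        (isCompact_closedBall p (ε/2)).prod (isCompact_univ_pi fun _ => isCompact_closedBall _ _)
      have hmem : ∀ m, ((zs m, es m) : (Fin n → ℂ) × (Fin q → Fin n → ℂ)) ∈ D := by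
        intro m
        refine ⟨hzcb m, fun i _ => ?_⟩
        have h1 := hco (zs m) (hzcb m) (es m i)
        have h2 : g (zs m) (es m i) (es m i) = 1 := by simpa using hes m i i
        rw [h2] at h1
        have h3 : δ * ‖es m i‖^2 ≤ 1 := by simpa using h1
        have h4 : ‖es m i‖^2 ≤ δ⁻¹ := by
          rw [← one_div, le_div_iff₀ hδ]
          nlinarith
        simp only [Metric.mem_closedBall, dist_zero_right]
        rw [hMdef]
        exact Real.le_sqrt_of_sq_le h4
      obtain ⟨a, haD, φ, hφmono, hconv⟩ :=
        hDcomp.tendsto_subseq (x := fun m => ((zs m, es m) : _ × _)) hmem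
      have ha1 : a.1 = p := by
        have h1 : Tendsto (fun m => zs (φ m)) atTop (𝓝 a.1) :=
          ((continuous_fst.tendsto a).comp hconv)
        have h2 : Tendsto (fun m => zs (φ m)) atTop (𝓝 p) := hzp.comp hφmono.tendsto_atTop
        exact tendsto_nhds_unique h1 h2
      have ha1Ω : a.1 ∈ Ω := by rw [ha1]; exact hpΩ
      have horth : OrthFrame g p a.2 := by
        have h : OrthFrame g a.1 a.2 := by
          intro i j
          have hGat := hGc i j a ha1Ω
          have h1 : Tendsto (fun m => g (zs (φ m)) (es (φ m) i) (es (φ m) j)) atTop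
              (𝓝 (g a.1 (a.2 i) (a.2 j))) := hGat.tendsto.comp hconv
          have h2 : (fun m => g (zs (φ m)) (es (φ m) i) (es (φ m) j))
              = fun _ => (if i = j then (1:ℂ) else 0) := funext fun m => hes (φ m) i j
          rw [h2] at h1
          exact (tendsto_nhds_unique h1 tendsto_const_nhds)
        rwa [ha1] at h
      have hTle : (∑ j, leviForm β p (a.2 j)) ≤ 0 := by
        have h : (∑ j, leviForm β a.1 (a.2 j)) ≤ 0 := by
          have hTc := stmt18_trace_continuousAt (q := q) hΩ hβ (x := a) ha1Ω
          exact le_of_tendsto (hTc.tendsto.comp hconv)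
            (Filter.Eventually.of_forall fun m => hTs (φ m))
        rwa [ha1] at h
      have hdecomp : ∀ w : Fin n → ℂ, leviForm β p w
          = leviForm α p w + lam p * leviForm ρ p w := by
        intro w
        have h1 := stmt18_leviForm_add (φ := α) (ψ := fun x => lam x * ρ x)
          (stmt18_ev_diff hΩ hα hpΩ) (stmt18_ev_diff hΩ (hlamsm.mul hρ) hpΩ)
          (stmt18_d2_diff hΩ hα hpΩ) (stmt18_d2_diff hΩ (hlamsm.mul hρ) hpΩ) w
        rw [hβdef, h1, stmt18_leviForm_mul_at (stmt18_ev_diff hΩ hlamsm hpΩ)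
          (stmt18_ev_diff hΩ hρ hpΩ) (stmt18_d2_diff hΩ hlamsm hpΩ)
          (stmt18_d2_diff hΩ hρ hpΩ) (hρ0 p hp) (hdρ0 p hp) w]
      have hsplit : (∑ j, leviForm β p (a.2 j))
          = (∑ j, leviForm α p (a.2 j)) + lam p * ∑ j, leviForm ρ p (a.2 j) := by
        simp only [hdecomp]
        rw [Finset.sum_add_distrib, Finset.mul_sum]
      obtain ⟨i, hfi, hci, -⟩ := hmin ⟨p, hp⟩
      have hpUi : p ∈ ball (i : Fin n → ℂ) (r i) := by
        have h1 : (⟨p, hp⟩ : Z) ∈ tsupport (f i) := subset_tsupport _ (by exact hfi)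
        have h2 : (⟨p, hp⟩ : Z) ∈ U i := hfsub i h1
        simp only [U, mem_preimage] at h2
        exact h2
      have hkeyi := hckey (i : Fin n → ℂ) i.2 p ⟨hp, ball_subset_closedBall hpUi⟩ a.2 horth
      have hlam_gt : c (i : Fin n → ℂ) ≤ lam p := by
        have h2 : lam₀Z ⟨p, hp⟩ < lam p := by
          have h := hgt p hp
          rwa [hamb p hp] at h
        exact le_of_lt (lt_of_le_of_lt hci h2)
      have hR0 : 0 ≤ ∑ j, leviForm ρ p (a.2 j) :=
        Finset.sum_nonneg fun j _ => hRnonneg p hp (a.2 j)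
      have h3 : c (i : Fin n → ℂ) * (∑ j, leviForm ρ p (a.2 j))
          ≤ lam p * ∑ j, leviForm ρ p (a.2 j) :=
        mul_le_mul_of_nonneg_right hlam_gt hR0
      rw [hsplit] at hTle
      linarith
    choose! V hVo hVp hVΩ hVpos using perpoint
    refine ⟨⋃ p ∈ Z, V p, isOpen_biUnion (fun p hp => hVo p hp),
      fun p hp => mem_biUnion hp (hVp p hp), iUnion₂_subset (fun p hp => hVΩ p hp), ?_⟩
    intro z hzW e he
    obtain ⟨p, hp, hzV⟩ := mem_iUnion₂.mp hzW
    exact hVpos p hp z hzV e he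

end Main
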